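/- Let f : [0,∞) → ℝ be a fixed continuous function and let W_2, W_3, … be independent standard Brownian motions. Then for every fixed t > 0, almost surely L^f(t,n) → +∞ as n → ∞. -/

import Mathlib

open MeasureTheory ProbabilityTheory Filter

noncomputable section

/-- A Brownian motion started at `0` with variance parameter `σ² = v`:
a stochastic process with `W 0 = 0` a.s., a.s. continuous paths, and
independent increments `W t - W s ∼ N(0, v (t - s))` for `0 ≤ s ≤ t`. -/
def IsBrownianMotion {Ω : Type*} [MeasurableSpace Ω] (P : Measure Ω) (v : NNReal)
    (W : ℝ → Ω → ℝ) : Prop :=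
  (∀ t : ℝ, Measurable (W t)) ∧
  (∀ᵐ ω ∂P, W 0 ω = 0) ∧
  (∀ᵐ ω ∂P, Continuous fun t => W t ω) ∧
  (∀ s t : ℝ, 0 ≤ s → s ≤ t →
    Measure.map (fun ω => W t ω - W s ω) P = gaussianReal 0 (v * (t - s).toNNReal)) ∧
  (∀ (n : ℕ) (ts : ℕ → ℝ), Monotone ts → 0 ≤ ts 0 →
    iIndepFun
      (fun k : Fin n => fun ω => W (ts (k + 1)) ω - W (ts k) ω) P)

/-- Last passage value with boundary condition `f`:
`L^f(t,n) = sup_{0 = t₀ ≤ t₁ ≤ … ≤ tₙ = t} ( f(t₁) + ∑_{i=2}^n (Wᵢ(tᵢ) - Wᵢ(tᵢ₋₁)) )`. -/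
def lppBoundary (f : ℝ → ℝ) (W : ℕ → ℝ → ℝ) (t : ℝ) (n : ℕ) : ℝ :=
  sSup {v : ℝ | ∃ ts : ℕ → ℝ, ts 0 = 0 ∧ ts n = t ∧ (∀ i < n, ts i ≤ ts (i + 1)) ∧
    v = f (ts 1) + ∑ i ∈ Finset.Icc 2 n, (W i (ts i) - W i (ts (i - 1)))}

private lemma ts_chain {ts : ℕ → ℝ} {n : ℕ} (h : ∀ i < n, ts i ≤ ts (i + 1)) :
    ∀ {i j : ℕ}, i ≤ j → j ≤ n → ts i ≤ ts j := by
  intro i j hij hjn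
  induction j, hij using Nat.le_induction with
  | base => exact le_rfl
  | succ j hij ih =>
    exact (ih ((Nat.le_succ j).trans hjn)).trans (h j (Nat.lt_of_succ_le hjn))

private lemma lpp_bddAbove (f : ℝ → ℝ) (g : ℕ → ℝ → ℝ) {t : ℝ} (ht : 0 < t)
    (hf : ContinuousOn f (Set.Ici 0)) (hc : ∀ i, Continuous (g i)) (n : ℕ) :
    BddAbove {v : ℝ | ∃ ts : ℕ → ℝ, ts 0 = 0 ∧ ts n = t ∧ (∀ i < n, ts i ≤ ts (i + 1)) ∧
      v = f (ts 1) + ∑ i ∈ Finset.Icc 2 n, (g i (ts i) - g i (ts (i - 1)))} := by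
  obtain ⟨Cf, hCf⟩ := (isCompact_Icc : IsCompact (Set.Icc (0:ℝ) t)).exists_bound_of_continuousOn
    (hf.mono (fun x hx => hx.1))
  have hC : ∀ j : ℕ, ∃ C : ℝ, ∀ x ∈ Set.Icc (0:ℝ) t, ‖g j x‖ ≤ C := fun j =>
    (isCompact_Icc : IsCompact (Set.Icc (0:ℝ) t)).exists_bound_of_continuousOn
      (hc j).continuousOn
  choose C hCg using hC
  refine ⟨Cf + ∑ j ∈ Finset.Icc 2 n, 2 * C j, ?_⟩
  rintro v ⟨ts, h0, hn, hstep, rfl⟩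
  rcases Nat.eq_zero_or_pos n with hn0 | hn1
  · subst hn0
    exact absurd (h0.symm.trans hn) ht.ne
  · have hmem : ∀ k, k ≤ n → ts k ∈ Set.Icc (0:ℝ) t := by
      intro k hk
      constructor
      · rw [← h0]; exact ts_chain hstep (Nat.zero_le k) hk
      · rw [← hn]; exact ts_chain hstep hk le_rfl
    have h1 : f (ts 1) ≤ Cf := by
      have := hCf _ (hmem 1 hn1)
      rw [Real.norm_eq_abs] at this
      exact (le_abs_self _).trans this
    have h2 : ∀ j ∈ Finset.Icc 2 n, g j (ts j) - g j (ts (j - 1)) ≤ 2 * C j := by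
      intro j hj
      obtain ⟨hj2, hjn⟩ := Finset.mem_Icc.1 hj
      have ha := hCg j _ (hmem j hjn)
      have hb := hCg j _ (hmem (j - 1) ((Nat.sub_le j 1).trans hjn))
      rw [Real.norm_eq_abs] at ha hb
      have ha' := abs_le.1 ha
      have hb' := abs_le.1 hb
      linarith [ha'.1, ha'.2, hb'.1, hb'.2]
    exact add_le_add h1 (Finset.sum_le_sum h2)

private lemma lpp_le (f : ℝ → ℝ) (g : ℕ → ℝ → ℝ) {t : ℝ} (ht : 0 < t)
    (hf : ContinuousOn f (Set.Ici 0)) (hc : ∀ i, Continuous (g i)) (hz : ∀ i, g i 0 = 0)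
    {i n : ℕ} (h2 : 2 ≤ i) (hin : i ≤ n) :
    f 0 + g i t ≤ lppBoundary f g t n := by
  refine le_csSup (lpp_bddAbove f g ht hf hc n) ?_
  refine ⟨fun j => if j < i then 0 else t, ?_, ?_, ?_, ?_⟩
  · simp [Nat.lt_of_lt_of_le Nat.zero_lt_two h2]
  · exact if_neg (Nat.not_lt.2 hin)
  · intro j hj
    by_cases hji : j + 1 < i
    · simp [Nat.lt_of_succ_lt hji, hji]
    · by_cases hji' : j < i
      · simp only [if_pos hji', if_neg hji]
        exact ht.le
      · simp [hji, hji']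
  · have h1i : (1:ℕ) < i := lt_of_lt_of_le one_lt_two h2
    beta_reduce
    rw [if_pos h1i]
    congr 1
    rw [Finset.sum_eq_single_of_mem i (Finset.mem_Icc.2 ⟨h2, hin⟩)]
    · have hii : ¬ i < i := lt_irrefl i
      have h' : i - 1 < i := Nat.sub_lt (by omega) one_pos
      simp [hii, h', hz i]
    · intro j hj hji
      rcases lt_or_gt_of_ne hji with h | h
      · have hj1 : j - 1 < i := by omega
        simp [h, hj1]
      · have hja : ¬ j < i := by omega
        have hjb : ¬ j - 1 < i := by omega
        simp [hja, hjb]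

/-- for a fixed continuous boundary `f : [0,∞) → ℝ` and independent
standard Brownian motions `W₂, W₃, …`, for every fixed `t > 0` almost surely
`L^f(t,n) → +∞` as `n → ∞`. -/
theorem lppBoundary_tendsto_atTop {Ω : Type*} [MeasurableSpace Ω] (P : Measure Ω)
    [IsProbabilityMeasure P] (f : ℝ → ℝ) (hf : ContinuousOn f (Set.Ici 0))
    (W : ℕ → ℝ → Ω → ℝ) (hBM : ∀ i, IsBrownianMotion P 1 (W i))
    (hindep : iIndepFun
      (fun (i : ℕ) (ω : Ω) => fun t : ℝ => W i t ω) P) :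
    ∀ t > (0 : ℝ), ∀ᵐ ω ∂P,
      Tendsto (fun n => lppBoundary f (fun i s => W i s ω) t n) atTop atTop := by
  intro t ht
  have htv : t.toNNReal ≠ 0 := (Real.toNNReal_pos.2 ht).ne'
  have hlaw : ∀ i, Measure.map (fun ω => W i t ω) P = gaussianReal 0 t.toNNReal := by
    intro i
    have h1 := (hBM i).2.2.2.1 0 t le_rfl ht.le
    have h2 : (fun ω => W i t ω) =ᵐ[P] (fun ω => W i t ω - W i 0 ω) := by
      filter_upwards [(hBM i).2.1] with ω hω using by rw [hω, sub_zero]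
    rw [Measure.map_congr h2, h1, sub_zero, one_mul]
  have hXindep : iIndepFun
      (fun i ω => W i t ω) P :=
    hindep.comp (fun _ g => g t) (fun _ => measurable_pi_apply t)
  have hBC : ∀ M : ℕ, ∀ᵐ ω ∂P, ∃ᶠ i in atTop, (M : ℝ) < W i t ω := by
    intro M
    set s : ℕ → Set Ω := fun i => (fun ω => W i t ω) ⁻¹' Set.Ioi (M : ℝ) with hs
    have hsm : ∀ i, MeasurableSet (s i) := fun i => ((hBM i).1 t) measurableSet_Ioi
    have hsI : iIndepSet s P := by
      rw [iIndepSet_iff_meas_biInter hsm]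
      intro S
      exact hXindep.meas_biInter (fun i _ => ⟨Set.Ioi (M:ℝ), measurableSet_Ioi, rfl⟩)
    have hmeasEq : ∀ i, P (s i) = gaussianReal 0 t.toNNReal (Set.Ioi (M:ℝ)) := by
      intro i
      rw [hs, ← Measure.map_apply ((hBM i).1 t) measurableSet_Ioi, hlaw i]
    have hpos : gaussianReal 0 t.toNNReal (Set.Ioi (M:ℝ)) ≠ 0 := by
      intro h
      have hvol := gaussianReal_absolutelyContinuous' 0 htv h
      simp [Real.volume_Ioi] at hvol
    have htsum : ∑' i, P (s i) = ⊤ := by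
      simp_rw [hmeasEq]
      exact ENNReal.tsum_const_eq_top_of_ne_zero hpos
    have h1 := measure_limsup_eq_one hsm hsI htsum
    have hae : ∀ᵐ ω ∂P, ω ∈ limsup s atTop :=
      (mem_ae_iff_prob_eq_one (MeasurableSet.measurableSet_limsup hsm)).2 h1
    filter_upwards [hae] with ω hω
    rw [mem_limsup_iff_frequently_mem] at hω
    exact hω
  filter_upwards [ae_all_iff.2 (fun i => (hBM i).2.2.1), ae_all_iff.2 (fun i => (hBM i).2.1),
    ae_all_iff.2 hBC] with ω hc hz hM
  rw [tendsto_atTop_atTop]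
  intro b
  obtain ⟨M, hMb⟩ := exists_nat_ge (b - f 0)
  obtain ⟨i, hi2, hiM⟩ := (frequently_atTop.1 (hM M)) 2
  refine ⟨i, fun n hn => ?_⟩
  have hle := lpp_le f (fun j s => W j s ω) ht hf hc hz hi2 hn
  calc b ≤ f 0 + W i t ω := by linarith
    _ ≤ _ := hle
end
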